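/- arXiv:1203.1714 — 2 statements merged into one kernel-verified Lean document; each statement's English description precedes it below -/
import Mathlib

section
/- Let x̄ ∈ ℝⁿ be a sparse signal with support T ⊆ {1,…,n} (i.e., x̄ₖ = 0 for every index k ∉ T), let A ∈ ℝ^{m×n} have full row rank, and let α > 0 satisfy 1/α < |x̄ₖ| for every k ∈ T. Set d = min_{k∈T} min(1/α, |x̄ₖ| − 1/α), let y = A x̄ + v, and L = {x ∈ ℝⁿ : A x = y}. Suppose A_T has full column rank. If x̂ minimizes J(x) = Σ_{k=1}^{n} F_α(|xₖ|) over L ∩ B(x̄, d), then ‖x̂ − x̄‖ ≤ 2√n (1 + ‖A_T† A_{T^c}‖) ‖A† v‖ + ‖A_T† v‖, where ‖A_T† A_{T^c}‖ denotes the ℓ₂ operator norm. -/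
open scoped BigOperators
open Matrix

noncomputable section

/-- The Euclidean (`ℓ₂`) norm of a finitely-indexed real vector. -/
def l2norm {ι : Type*} [Fintype ι] (x : ι → ℝ) : ℝ :=
  Real.sqrt (∑ i, (x i) ^ 2)

/-- The `ℓ₂` operator norm of a real matrix. -/
def l2opNorm {ι κ : Type*} [Fintype ι] [Fintype κ] [DecidableEq κ] (M : Matrix ι κ ℝ) : ℝ :=
  ‖LinearMap.toContinuousLinearMap (Matrix.toEuclideanLin M)‖

/-- The approximation `F_α` to the indicator of nonzeroness. -/
def Fa (α w : ℝ) : ℝ :=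
  if |w| ≤ 1 / α then 2 * α * |w| - α ^ 2 * w ^ 2 else 1

/-- The `k`-th block (of length `D`) of a block vector. -/
def blk {N D : ℕ} (x : Fin N × Fin D → ℝ) (k : Fin N) : Fin D → ℝ :=
  fun j => x (k, j)

/-- The cost function `J(x) = ∑ₖ F_α(‖xₖ‖)`. -/
def J {N D : ℕ} (α : ℝ) (x : Fin N × Fin D → ℝ) : ℝ :=
  ∑ k, Fa α (l2norm (blk x k))

/-- Pseudo-inverse `A† = Aᵀ (A Aᵀ)⁻¹` of a full-row-rank matrix. -/
def pinvR {ι κ : Type*} [Fintype ι] [Fintype κ] [DecidableEq ι] (A : Matrix ι κ ℝ) :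
    Matrix κ ι ℝ :=
  Aᵀ * (A * Aᵀ)⁻¹

/-- Pseudo-inverse `A† = (Aᵀ A)⁻¹ Aᵀ` of a full-column-rank matrix. -/
def pinvC {ι κ : Type*} [Fintype ι] [Fintype κ] [DecidableEq κ] (A : Matrix ι κ ℝ) :
    Matrix κ ι ℝ :=
  (Aᵀ * A)⁻¹ * Aᵀ

/-- The submatrix `A_T` formed by the column blocks of `A` indexed by `T`. -/
def subCols {ι : Type*} {N D : ℕ} (A : Matrix ι (Fin N × Fin D) ℝ) (T : Finset (Fin N)) :
    Matrix ι (↥T × Fin D) ℝ :=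
  A.submatrix id (fun p => ((p.1 : Fin N), p.2))

/-- The subvector `x_T` formed by the blocks of `x` indexed by `T`. -/
def subVec {N D : ℕ} (x : Fin N × Fin D → ℝ) (T : Finset (Fin N)) : ↥T × Fin D → ℝ :=
  fun p => x ((p.1 : Fin N), p.2)

lemma l2norm_eq_norm {ι : Type*} [Fintype ι] (x : ι → ℝ) :
    l2norm x = ‖(WithLp.equiv 2 (ι → ℝ)).symm x‖ := by
  rw [EuclideanSpace.norm_eq]
  unfold l2norm
  congr 1
  refine Finset.sum_congr rfl fun i _ => ?_
  simp [Real.norm_eq_abs, sq_abs]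

lemma l2norm_nonneg {ι : Type*} [Fintype ι] (x : ι → ℝ) : 0 ≤ l2norm x :=
  Real.sqrt_nonneg _

lemma l2norm_sub_le {ι : Type*} [Fintype ι] (x y : ι → ℝ) :
    l2norm (x - y) ≤ l2norm x + l2norm y := by
  simp only [l2norm_eq_norm]
  have : (WithLp.equiv 2 (ι → ℝ)).symm (x - y)
      = (WithLp.equiv 2 (ι → ℝ)).symm x - (WithLp.equiv 2 (ι → ℝ)).symm y := rfl
  rw [this]
  exact norm_sub_le _ _

lemma abs_le_l2norm {ι : Type*} [Fintype ι] (x : ι → ℝ) (i : ι) : |x i| ≤ l2norm x := by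
  rw [← Real.sqrt_sq_eq_abs]
  exact Real.sqrt_le_sqrt (Finset.single_le_sum (fun j _ => sq_nonneg (x j)) (Finset.mem_univ i))

lemma sqrt_add_le' {a b : ℝ} (ha : 0 ≤ a) (hb : 0 ≤ b) :
    Real.sqrt (a + b) ≤ Real.sqrt a + Real.sqrt b := by
  have h := Real.sqrt_le_sqrt (show a + b ≤ (Real.sqrt a + Real.sqrt b) ^ 2 by
    nlinarith [Real.sq_sqrt ha, Real.sq_sqrt hb, Real.sqrt_nonneg a, Real.sqrt_nonneg b])
  rwa [Real.sqrt_sq (by positivity)] at h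

lemma l2norm_le_sum_abs {ι : Type*} [Fintype ι] (x : ι → ℝ) : l2norm x ≤ ∑ i, |x i| := by
  have h1 : ∑ i, (x i) ^ 2 ≤ (∑ i, |x i|) ^ 2 := by
    have hterm : ∀ i ∈ Finset.univ, (x i) ^ 2 ≤ |x i| * ∑ j, |x j| := by
      intro i _
      have h2 : |x i| ≤ ∑ j, |x j| :=
        Finset.single_le_sum (f := fun j => |x j|) (fun j _ => abs_nonneg (x j))
          (Finset.mem_univ i)
      calc (x i) ^ 2 = |x i| * |x i| := by rw [← sq_abs]; ring
        _ ≤ |x i| * ∑ j, |x j| := mul_le_mul_of_nonneg_left h2 (abs_nonneg _)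
    calc ∑ i, (x i) ^ 2 ≤ ∑ i, |x i| * ∑ j, |x j| := Finset.sum_le_sum hterm
      _ = (∑ i, |x i|) ^ 2 := by rw [← Finset.sum_mul]; ring
  calc l2norm x ≤ Real.sqrt ((∑ i, |x i|) ^ 2) := Real.sqrt_le_sqrt h1
    _ = ∑ i, |x i| := Real.sqrt_sq (Finset.sum_nonneg fun i _ => abs_nonneg _)

lemma sum_abs_le_sqrt_card {ι : Type*} [Fintype ι] (x : ι → ℝ) :
    ∑ i, |x i| ≤ Real.sqrt (Fintype.card ι) * l2norm x := by
  have h1 : (∑ i, |x i|) ^ 2 ≤ (Fintype.card ι : ℝ) * ∑ i, (x i) ^ 2 := by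
    have := Finset.sum_mul_sq_le_sq_mul_sq Finset.univ (fun _ => (1:ℝ)) (fun i => |x i|)
    simpa [sq_abs] using this
  have h2 : ∑ i, |x i| = Real.sqrt ((∑ i, |x i|) ^ 2) :=
    (Real.sqrt_sq (Finset.sum_nonneg fun i _ => abs_nonneg _)).symm
  rw [h2]
  calc Real.sqrt ((∑ i, |x i|) ^ 2) ≤ Real.sqrt ((Fintype.card ι : ℝ) * ∑ i, (x i) ^ 2) :=
        Real.sqrt_le_sqrt h1
    _ = Real.sqrt (Fintype.card ι) * l2norm x := by
        rw [Real.sqrt_mul (by positivity)]; rfl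

lemma l2norm_mulVec_le {ι κ : Type*} [Fintype ι] [Fintype κ] [DecidableEq κ]
    (M : Matrix ι κ ℝ) (x : κ → ℝ) : l2norm (M *ᵥ x) ≤ l2opNorm M * l2norm x := by
  have h := (LinearMap.toContinuousLinearMap (Matrix.toEuclideanLin M)).le_opNorm
    ((WithLp.equiv 2 (κ → ℝ)).symm x)
  have happ : (LinearMap.toContinuousLinearMap (Matrix.toEuclideanLin M))
      ((WithLp.equiv 2 (κ → ℝ)).symm x) = (WithLp.equiv 2 (ι → ℝ)).symm (M *ᵥ x) := by
    simp [Matrix.toEuclideanLin_apply]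
  rw [happ] at h
  rw [l2norm_eq_norm, l2norm_eq_norm]
  exact h

lemma isUnit_det_of_rank_eq_card {ι : Type*} [Fintype ι] [DecidableEq ι]
    (B : Matrix ι ι ℝ) (h : B.rank = Fintype.card ι) : IsUnit B.det := by
  rw [← Matrix.isUnit_iff_isUnit_det, ← Matrix.mulVec_surjective_iff_isUnit]
  have hrange : LinearMap.range B.mulVecLin = ⊤ := by
    apply Submodule.eq_top_of_finrank_eq
    rw [show Module.finrank ℝ ↥(LinearMap.range B.mulVecLin) = B.rank from rfl, h,
      Module.finrank_pi]
  intro y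
  have : y ∈ LinearMap.range B.mulVecLin := hrange ▸ Submodule.mem_top
  obtain ⟨z, hz⟩ := this
  exact ⟨z, hz⟩

lemma Fa_nonneg {α : ℝ} (hα : 0 < α) (w : ℝ) : 0 ≤ Fa α w := by
  unfold Fa
  split_ifs with h
  · have h1 : |w| * α ≤ 1 := (le_div_iff₀ hα).mp h
    have h2 : 0 ≤ (α * |w|) * (2 - α * |w|) :=
      mul_nonneg (by positivity) (by nlinarith)
    nlinarith [h2, sq_abs w]
  · norm_num

lemma Fa_le_one {α : ℝ} (hα : 0 < α) (w : ℝ) : Fa α w ≤ 1 := by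
  unfold Fa
  split_ifs with h
  · nlinarith [sq_nonneg (α * |w| - 1), sq_abs w]
  · exact le_refl _

lemma Fa_le_two_mul {α : ℝ} (hα : 0 < α) (w : ℝ) : Fa α w ≤ 2 * α * |w| := by
  unfold Fa
  split_ifs with h
  · nlinarith [sq_nonneg (α * w)]
  · push_neg at h
    have : 1 < α * |w| := by
      rw [div_lt_iff₀ hα] at h; linarith [h]
    linarith

lemma Fa_eq_one {α w : ℝ} (hα : 0 < α) (h : 1 / α ≤ |w|) : Fa α w = 1 := by
  unfold Fa
  split_ifs with h'
  · have heq : |w| = 1 / α := le_antisymm h' h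
    have hw2 : w ^ 2 = (1 / α) ^ 2 := by rw [← sq_abs, heq]
    rw [heq, hw2]
    field_simp
    ring
  · rfl

lemma le_Fa {α w : ℝ} (hα : 0 < α) (h : |w| ≤ 1 / α) : α * |w| ≤ Fa α w := by
  unfold Fa
  rw [if_pos h]
  have h1 : |w| * α ≤ 1 := (le_div_iff₀ hα).mp h
  have h2 : 0 ≤ (α * |w|) * (1 - α * |w|) :=
    mul_nonneg (by positivity) (by nlinarith)
  nlinarith [h2, sq_abs w]

lemma mulVec_split {m n : ℕ} (A : Matrix (Fin m) (Fin n) ℝ) (T : Finset (Fin n))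
    (x : Fin n → ℝ) :
    A *ᵥ x = (A.submatrix id (Subtype.val : ↥T → Fin n)) *ᵥ (fun p => x p.val)
           + (A.submatrix id (Subtype.val : ↥(Tᶜ) → Fin n)) *ᵥ (fun p => x p.val) := by
  funext i
  simp only [Matrix.mulVec, dotProduct, Matrix.submatrix_apply, id_eq, Pi.add_apply]
  rw [Finset.sum_coe_sort T (fun j => A i j * x j),
    Finset.sum_coe_sort (Tᶜ) (fun j => A i j * x j),
    Finset.sum_add_sum_compl T (fun j => A i j * x j)]

lemma l2norm_split {n : ℕ} (T : Finset (Fin n)) (x : Fin n → ℝ) :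
    l2norm x ≤ l2norm (fun q : ↥T => x q.val) + l2norm (fun q : ↥(Tᶜ) => x q.val) := by
  unfold l2norm
  have hx : ∑ i, (x i) ^ 2
      = (∑ q : ↥T, (x q.val) ^ 2) + ∑ q : ↥(Tᶜ), (x q.val) ^ 2 := by
    rw [Finset.sum_coe_sort T (fun j => (x j) ^ 2),
      Finset.sum_coe_sort (Tᶜ) (fun j => (x j) ^ 2),
      Finset.sum_add_sum_compl T (fun j => (x j) ^ 2)]
  rw [hx]
  exact sqrt_add_le' (Finset.sum_nonneg fun q _ => sq_nonneg _)
    (Finset.sum_nonneg fun q _ => sq_nonneg _)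

/-- **Stability of the local minimum of the ZAP cost function (scalar case, `D = 1`).**
If `x̂` minimizes `J(x) = ∑ₖ F_α(|xₖ|)` over `L ∩ B(x̄, d)`, then
`‖x̂ − x̄‖ ≤ 2√n (1 + ‖A_T† A_{Tᶜ}‖) ‖A† v‖ + ‖A_T† v‖`. -/
theorem zap_stability {m n : ℕ} (A : Matrix (Fin m) (Fin n) ℝ)
    (xbar xhat : Fin n → ℝ) (v : Fin m → ℝ) (T : Finset (Fin n)) (hT : T.Nonempty)
    (α : ℝ) (hα : 0 < α)
    (hsupp : ∀ k ∉ T, xbar k = 0)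
    (hrow : A.rank = m)
    (hcol : (A.submatrix id (Subtype.val : ↥T → Fin n)).rank = T.card)
    (halpha : ∀ k ∈ T, 1 / α < |xbar k|)
    (d : ℝ) (hd : d = T.inf' hT fun k => min (1 / α) (|xbar k| - 1 / α))
    (hfeas : A *ᵥ xhat = A *ᵥ xbar + v)
    (hball : l2norm (xhat - xbar) ≤ d)
    (hmin : ∀ x : Fin n → ℝ, A *ᵥ x = A *ᵥ xbar + v → l2norm (x - xbar) ≤ d →
      ∑ k, Fa α |xhat k| ≤ ∑ k, Fa α |x k|) :
    l2norm (xhat - xbar) ≤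
      2 * Real.sqrt n *
          (1 + l2opNorm (pinvC (A.submatrix id (Subtype.val : ↥T → Fin n)) *
            A.submatrix id (Subtype.val : ↥(Tᶜ) → Fin n))) *
        l2norm (pinvR A *ᵥ v) +
      l2norm (pinvC (A.submatrix id (Subtype.val : ↥T → Fin n)) *ᵥ v) := by
  classical
  set AT := A.submatrix id (Subtype.val : ↥T → Fin n) with hATdef
  set ATc := A.submatrix id (Subtype.val : ↥(Tᶜ) → Fin n) with hATcdef
  set p := pinvR A *ᵥ v with hpdef
  set r := l2norm p with hrdef
  set op := l2opNorm (pinvC AT * ATc) with hopdef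
  set t := l2norm (pinvC AT *ᵥ v) with htdef
  obtain ⟨k₀, hk₀⟩ := hT
  have hn1 : (1:ℝ) ≤ n := by
    have h := k₀.isLt
    exact_mod_cast Nat.one_le_iff_ne_zero.mpr (by omega)
  have hsqn : 1 ≤ Real.sqrt n := by
    rw [show (1:ℝ) = Real.sqrt 1 from Real.sqrt_one.symm]
    exact Real.sqrt_le_sqrt hn1
  have hop0 : 0 ≤ op := norm_nonneg _
  have ht0 : 0 ≤ t := l2norm_nonneg _
  have hr0 : 0 ≤ r := l2norm_nonneg _
  have hd_le_inv : d ≤ 1 / α := hd ▸ le_trans (Finset.inf'_le _ hk₀) (min_le_left _ _)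
  have hd_le : ∀ k ∈ T, d ≤ |xbar k| - 1 / α := fun k hk =>
    hd ▸ le_trans (Finset.inf'_le _ hk) (min_le_right _ _)
  have hclaim : ∀ x : Fin n → ℝ, l2norm (x - xbar) ≤ d → ∀ k ∈ T, Fa α |x k| = 1 := by
    intro x hx k hk
    have h1 : |x k - xbar k| ≤ d :=
      le_trans (by simpa using abs_le_l2norm (x - xbar) k) hx
    have h2 : 1 / α ≤ |x k| := by
      have h3 := abs_sub_abs_le_abs_sub (xbar k) (x k)
      have h4 : |xbar k - x k| = |x k - xbar k| := abs_sub_comm _ _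
      have h5 := hd_le k hk
      linarith
    apply Fa_eq_one hα
    rwa [abs_abs]
  rcases le_or_gt r d with hcase | hcase
  · -- main case: x0 := xbar + p is feasible and in the ball
    set x0 := xbar + p with hx0def
    have hAAt : IsUnit (A * Aᵀ).det := by
      apply isUnit_det_of_rank_eq_card
      rw [Matrix.rank_self_mul_transpose, hrow, Fintype.card_fin]
    have hAP : A * pinvR A = 1 := by
      unfold pinvR
      rw [← Matrix.mul_assoc]
      exact Matrix.mul_nonsing_inv _ hAAt
    have hx0feas : A *ᵥ x0 = A *ᵥ xbar + v := by
      rw [hx0def, Matrix.mulVec_add, hpdef, Matrix.mulVec_mulVec, hAP, Matrix.one_mulVec]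
    have hx0sub : x0 - xbar = p := by
      rw [hx0def]; abel
    have hx0ball : l2norm (x0 - xbar) ≤ d := by rw [hx0sub, ← hrdef]; exact hcase
    have hmin0 := hmin x0 hx0feas hx0ball
    have hsum1 : ∑ k, Fa α |xhat k| = ∑ k ∈ T, Fa α |xhat k| + ∑ k ∈ Tᶜ, Fa α |xhat k| :=
      (Finset.sum_add_sum_compl T _).symm
    have hsum2 : ∑ k, Fa α |x0 k| = ∑ k ∈ T, Fa α |x0 k| + ∑ k ∈ Tᶜ, Fa α |x0 k| :=
      (Finset.sum_add_sum_compl T _).symm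
    have hT1 : ∑ k ∈ T, Fa α |xhat k| = T.card := by
      rw [Finset.sum_congr rfl (fun k hk => hclaim xhat hball k hk)]
      simp
    have hT2 : ∑ k ∈ T, Fa α |x0 k| ≤ T.card := by
      calc ∑ k ∈ T, Fa α |x0 k| ≤ ∑ _k ∈ T, (1:ℝ) :=
            Finset.sum_le_sum fun k _ => Fa_le_one hα _
        _ = T.card := by simp
    have hcmp : ∑ k ∈ Tᶜ, Fa α |xhat k| ≤ ∑ k ∈ Tᶜ, Fa α |x0 k| := by
      rw [hsum1, hsum2] at hmin0
      linarith
    have hub : ∑ k ∈ Tᶜ, Fa α |x0 k| ≤ 2 * α * ∑ k ∈ Tᶜ, |p k| := by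
      rw [Finset.mul_sum]
      refine Finset.sum_le_sum fun k hk => ?_
      have hk' : k ∉ T := Finset.mem_compl.mp hk
      have hx0k : x0 k = p k := by simp [hx0def, hsupp k hk']
      rw [hx0k]
      calc Fa α |p k| ≤ 2 * α * |(|p k|)| := Fa_le_two_mul hα _
        _ = 2 * α * |p k| := by rw [abs_abs]
    have hlb : α * ∑ k ∈ Tᶜ, |xhat k| ≤ ∑ k ∈ Tᶜ, Fa α |xhat k| := by
      rw [Finset.mul_sum]
      refine Finset.sum_le_sum fun k hk => ?_
      have hk' : k ∉ T := Finset.mem_compl.mp hk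
      have hxk : |xhat k| ≤ 1 / α := by
        have h1 : |xhat k - xbar k| ≤ d :=
          le_trans (by simpa using abs_le_l2norm (xhat - xbar) k) hball
        rw [hsupp k hk', sub_zero] at h1
        exact le_trans h1 hd_le_inv
      have h2 := le_Fa hα (show |(|xhat k|)| ≤ 1 / α by rwa [abs_abs])
      calc α * |xhat k| = α * |(|xhat k|)| := by rw [abs_abs]
        _ ≤ Fa α |xhat k| := h2
    have hl1p : ∑ k ∈ Tᶜ, |p k| ≤ Real.sqrt n * r := by
      calc ∑ k ∈ Tᶜ, |p k| ≤ ∑ k, |p k| :=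
            Finset.sum_le_sum_of_subset_of_nonneg (Finset.subset_univ _)
              (fun k _ _ => abs_nonneg _)
        _ ≤ Real.sqrt (Fintype.card (Fin n)) * l2norm p := sum_abs_le_sqrt_card p
        _ = Real.sqrt n * r := by rw [Fintype.card_fin, hrdef]
    have hec1 : ∑ k ∈ Tᶜ, |xhat k| ≤ 2 * (Real.sqrt n * r) := by
      have h1 : α * ∑ k ∈ Tᶜ, |xhat k| ≤ α * (2 * (Real.sqrt n * r)) := by
        have h2 := le_trans hlb (le_trans hcmp hub)
        nlinarith [hα.le]
      exact le_of_mul_le_mul_left h1 hα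
    -- now the vector decomposition
    have hGram : IsUnit (ATᵀ * AT).det := by
      apply isUnit_det_of_rank_eq_card
      rw [Matrix.rank_transpose_mul_self, hcol, Fintype.card_coe]
    have hQA : pinvC AT * AT = 1 := by
      unfold pinvC
      rw [Matrix.mul_assoc]
      exact Matrix.nonsing_inv_mul _ hGram
    have hAe : A *ᵥ (xhat - xbar) = v := by
      rw [Matrix.mulVec_sub, hfeas]; abel
    set eT := fun q : ↥T => (xhat - xbar) q.val with heTdef
    set ec := fun q : ↥(Tᶜ) => (xhat - xbar) q.val with hecdef
    have hsplitV : AT *ᵥ eT + ATc *ᵥ ec = v := by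
      rw [heTdef, hecdef, hATdef, hATcdef, ← mulVec_split A T (xhat - xbar)]
      exact hAe
    have heT : eT = pinvC AT *ᵥ v - (pinvC AT * ATc) *ᵥ ec := by
      have h1 : pinvC AT *ᵥ (AT *ᵥ eT + ATc *ᵥ ec) = pinvC AT *ᵥ v := by rw [hsplitV]
      rw [Matrix.mulVec_add, Matrix.mulVec_mulVec, Matrix.mulVec_mulVec, hQA,
        Matrix.one_mulVec] at h1
      rw [← h1]
      exact (add_sub_cancel_right _ _).symm
    have hecnorm : l2norm ec ≤ 2 * (Real.sqrt n * r) := by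
      calc l2norm ec ≤ ∑ q : ↥(Tᶜ), |ec q| := l2norm_le_sum_abs ec
        _ = ∑ k ∈ Tᶜ, |(xhat - xbar) k| :=
            Finset.sum_coe_sort (Tᶜ) (fun k => |(xhat - xbar) k|)
        _ = ∑ k ∈ Tᶜ, |xhat k| := by
            refine Finset.sum_congr rfl fun k hk => ?_
            rw [Pi.sub_apply, hsupp k (Finset.mem_compl.mp hk), sub_zero]
        _ ≤ 2 * (Real.sqrt n * r) := hec1
    have heTnorm : l2norm eT ≤ t + op * l2norm ec := by
      rw [heT]
      refine le_trans (l2norm_sub_le _ _) ?_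
      rw [htdef]
      exact add_le_add (le_refl _) (l2norm_mulVec_le _ _)
    have hfinal : l2norm (xhat - xbar) ≤ l2norm eT + l2norm ec :=
      l2norm_split T (xhat - xbar)
    have hopec : op * l2norm ec ≤ op * (2 * (Real.sqrt n * r)) :=
      mul_le_mul_of_nonneg_left hecnorm hop0
    have hring : 2 * Real.sqrt n * (1 + op) * r
        = 2 * (Real.sqrt n * r) + op * (2 * (Real.sqrt n * r)) := by ring
    linarith
  · -- degenerate case: d < r
    have h2 : r ≤ 2 * Real.sqrt n * (1 + op) * r := by
      have h3 : (1:ℝ) * r ≤ (2 * Real.sqrt n * (1 + op)) * r :=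
        mul_le_mul_of_nonneg_right (by nlinarith) hr0
      linarith
    linarith
end
end

section
/- Let M ∈ ℝ^{s×m} be the matrix M = (A_TᵀA_T)⁻¹A_Tᵀ for a matrix A_T ∈ ℝ^{m×s} of full column rank, and let v be a random vector in ℝ^m whose components are independent, each with mean 0 and variance σ². Then the mean squared error of the oracle estimate satisfies E‖M v‖² = σ² · tr((A_TᵀA_T)⁻¹). -/
open scoped BigOperators
open Matrix

noncomputable section

lemma l2norm_sq {ι : Type*} [Fintype ι] (x : ι → ℝ) : l2norm x ^ 2 = ∑ i, (x i) ^ 2 :=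
  Real.sq_sqrt (Finset.sum_nonneg fun i _ => sq_nonneg _)

lemma isUnit_of_full_rank {s : ℕ} (B : Matrix (Fin s) (Fin s) ℝ) (h : B.rank = s) : IsUnit B := by
  rw [← Matrix.mulVec_surjective_iff_isUnit]
  have : LinearMap.range B.mulVecLin = ⊤ := by
    apply Submodule.eq_top_of_finrank_eq
    rw [Matrix.rank] at h
    simp [h]
  intro y
  exact LinearMap.mem_range.mp (this ▸ Submodule.mem_top (x := y) (R := ℝ))

lemma gram_inv {m s : ℕ} (A : Matrix (Fin m) (Fin s) ℝ) (hcol : A.rank = s) :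
    pinvC A * (pinvC A)ᵀ = (Aᵀ * A)⁻¹ := by
  have hB : IsUnit (Aᵀ * A) := by
    apply isUnit_of_full_rank
    rw [Matrix.rank_transpose_mul_self, hcol]
  have hsymm : (Aᵀ * A)ᵀ = Aᵀ * A := by
    rw [Matrix.transpose_mul, Matrix.transpose_transpose]
  have hdet : IsUnit (Aᵀ * A).det := (Matrix.isUnit_iff_isUnit_det _).mp hB
  rw [pinvC, Matrix.transpose_mul, Matrix.transpose_nonsing_inv, hsymm]
  calc (Aᵀ * A)⁻¹ * Aᵀ * (Aᵀᵀ * (Aᵀ * A)⁻¹)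
      = (Aᵀ * A)⁻¹ * ((Aᵀ * A) * (Aᵀ * A)⁻¹) := by
        simp only [Matrix.transpose_transpose, Matrix.mul_assoc]
    _ = (Aᵀ * A)⁻¹ := by rw [Matrix.mul_nonsing_inv _ hdet, Matrix.mul_one]


open MeasureTheory ProbabilityTheory in
/-- The mean squared error of the oracle estimate: if the components of the noise `v`
are independent with mean `0` and variance `σ²`, then
`E ‖A_T† v‖² = σ² · tr((A_Tᵀ A_T)⁻¹)`. -/
theorem oracle_mse {m s : ℕ} (A_T : Matrix (Fin m) (Fin s) ℝ)
    (hcol : A_T.rank = s)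
    {Ω : Type*} [MeasureSpace Ω] [IsProbabilityMeasure (ℙ : Measure Ω)]
    (v : Fin m → Ω → ℝ) (σ : ℝ)
    (hind : iIndepFun v ℙ)
    (hL2 : ∀ i, MemLp (v i) 2 ℙ)
    (hmean : ∀ i, ∫ ω, v i ω ∂ℙ = 0)
    (hvar : ∀ i, variance (v i) ℙ = σ ^ 2) :
    ∫ ω, (l2norm (pinvC A_T *ᵥ fun i => v i ω)) ^ 2 ∂ℙ =
      σ ^ 2 * (A_Tᵀ * A_T)⁻¹.trace := by
  set M := pinvC A_T with hM
  have hint : ∀ i i' : Fin m, Integrable (fun ω => v i ω * v i' ω) ℙ := by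
    intro i i'
    rcases eq_or_ne i i' with rfl | hne
    · simpa [sq] using (hL2 i).integrable_sq
    · exact (hind.indepFun hne).integrable_mul ((hL2 i).integrable one_le_two)
        ((hL2 i').integrable one_le_two)
  have hcov : ∀ i i' : Fin m, ∫ ω, v i ω * v i' ω ∂ℙ = if i = i' then σ ^ 2 else 0 := by
    intro i i'
    rcases eq_or_ne i i' with rfl | hne
    · have h := variance_eq_sub (hL2 i)
      rw [hmean i, hvar i] at h
      simp only [Pi.pow_apply] at h
      rw [if_pos rfl]
      have heq : (fun ω => v i ω * v i ω) = fun ω => v i ω ^ 2 := funext fun ω => by ring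
      rw [heq]
      linarith
    · have h := (hind.indepFun hne).integral_mul_eq_mul_integral
        ((hL2 i).integrable one_le_two).1 ((hL2 i').integrable one_le_two).1
      rw [if_neg hne]
      simpa [Pi.mul_apply, hmean i, hmean i'] using h
  have key : ∀ ω, (l2norm (M *ᵥ fun i => v i ω)) ^ 2
      = ∑ j, ∑ i, ∑ i', (M j i * M j i') * (v i ω * v i' ω) := by
    intro ω
    rw [l2norm_sq]
    refine Finset.sum_congr rfl fun j _ => ?_
    simp only [Matrix.mulVec, dotProduct]
    rw [sq, Finset.sum_mul_sum]
    exact Finset.sum_congr rfl fun i _ => Finset.sum_congr rfl fun i' _ => by ring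
  have hintc : ∀ (j : Fin s) (i i' : Fin m),
      Integrable (fun ω => (M j i * M j i') * (v i ω * v i' ω)) ℙ :=
    fun j i i' => (hint i i').const_mul _
  calc ∫ ω, (l2norm (M *ᵥ fun i => v i ω)) ^ 2 ∂ℙ
      = ∫ ω, ∑ j, ∑ i, ∑ i', (M j i * M j i') * (v i ω * v i' ω) ∂ℙ := by
        exact integral_congr_ae (Filter.Eventually.of_forall key)
    _ = ∑ j, ∑ i, ∑ i', (M j i * M j i') * ∫ ω, v i ω * v i' ω ∂ℙ := by
        rw [integral_finset_sum _ fun j _ =>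
          integrable_finset_sum _ fun i _ => integrable_finset_sum _ fun i' _ => hintc j i i']
        refine Finset.sum_congr rfl fun j _ => ?_
        rw [integral_finset_sum _ fun i _ => integrable_finset_sum _ fun i' _ => hintc j i i']
        refine Finset.sum_congr rfl fun i _ => ?_
        rw [integral_finset_sum _ fun i' _ => hintc j i i']
        exact Finset.sum_congr rfl fun i' _ => integral_const_mul _ _
    _ = σ ^ 2 * ∑ j, ∑ i, M j i ^ 2 := by
        simp only [hcov, mul_ite, mul_zero]
        rw [Finset.mul_sum]
        refine Finset.sum_congr rfl fun j _ => ?_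
        rw [Finset.mul_sum]
        refine Finset.sum_congr rfl fun i _ => ?_
        rw [Finset.sum_ite_eq Finset.univ i fun i' => M j i * M j i' * σ ^ 2,
          if_pos (Finset.mem_univ i)]
        ring
    _ = σ ^ 2 * (A_Tᵀ * A_T)⁻¹.trace := by
        rw [← gram_inv A_T hcol, Matrix.trace, ← hM]
        congr 1
        refine Finset.sum_congr rfl fun j _ => ?_
        rw [Matrix.diag_apply, Matrix.mul_apply]
        exact Finset.sum_congr rfl fun i _ => by rw [Matrix.transpose_apply, sq]
end
end
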